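/- Let g be the 4-dimensional nilpotent real Lie algebra with basis e_1,…,e_4 and nonzero brackets [e_1,e_2] = −e_3 and [e_1,e_3] = −e_4, and let K be the endomorphism equal to +id on the subspace g⁺ := span(e_1, e_4 − e_2) and −id on the subspace g⁻ := span(e_2, e_3). Then: (i) this almost linear D-complex structure is not integrable, since [e_1, e_4 − e_2] = e_3 ∉ g⁺; (ii) K is not linear C∞-pure at the 2nd stage: the K-invariant form e^1∧e^4 and the K-anti-invariant form e^1∧(e^2 + e^4) = e^1∧e^4 + d(e^3) are both d-closed and define the same nonzero class, so 0 ≠ [e^1∧e^4] ∈ H^{2+}_K(g;ℝ) ∩ H^{2−}_K(g;ℝ). -/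

import Mathlib

open scoped BigOperators

noncomputable section ChevalleyEilenberg

variable (g : Type*) [LieRing g] [LieAlgebra ℝ g]

/-- The Chevalley–Eilenberg differential of an alternating `k`-form on a real Lie
algebra, as a function on `(k+1)`-tuples:
`(dα)(x_0,…,x_k) = Σ_{i<j} (−1)^{i+j} α([x_i,x_j], x_0,…,x̂_i,…,x̂_j,…,x_k)`. -/
def ceD : {k : ℕ} → AlternatingMap ℝ g ℝ (Fin k) → ((Fin (k + 1) → g) → ℝ)
  | 0, _ => 0
  | (k + 1), α => fun x =>
      ∑ i : Fin (k + 2), ∑ j : Fin (k + 2),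
        if hij : (i : ℕ) < (j : ℕ) then
          (-1 : ℝ) ^ ((i : ℕ) + (j : ℕ)) *
            α (fun m : Fin (k + 1) =>
                if hm : (m : ℕ) = 0 then ⁅x i, x j⁆
                else
                  x (j.succAbove
                      ((⟨(i : ℕ), by omega⟩ : Fin (k + 1)).succAbove
                        (⟨(m : ℕ) - 1, by omega⟩ : Fin k))))
        else 0

theorem ceD_zero {k : ℕ} : ceD g (0 : AlternatingMap ℝ g ℝ (Fin k)) = 0 := by
  cases k with
  | zero => rfl
  | succ k => funext x; simp [ceD]

theorem ceD_add {k : ℕ} (α β : AlternatingMap ℝ g ℝ (Fin k)) :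
    ceD g (α + β) = ceD g α + ceD g β := by
  cases k with
  | zero => funext x; simp [ceD]
  | succ k =>
    funext x
    simp only [ceD, Pi.add_apply, AlternatingMap.add_apply]
    rw [← Finset.sum_add_distrib]
    refine Finset.sum_congr rfl fun i _ => ?_
    rw [← Finset.sum_add_distrib]
    refine Finset.sum_congr rfl fun j _ => ?_
    split
    · ring
    · ring

theorem ceD_smul {k : ℕ} (c : ℝ) (α : AlternatingMap ℝ g ℝ (Fin k)) :
    ceD g (c • α) = c • ceD g α := by
  cases k with
  | zero => funext x; simp [ceD]
  | succ k =>
    funext x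
    simp only [ceD, Pi.smul_apply, AlternatingMap.smul_apply, smul_eq_mul,
      Finset.mul_sum]
    refine Finset.sum_congr rfl fun i _ => ?_
    refine Finset.sum_congr rfl fun j _ => ?_
    split
    · ring
    · ring

/-- The space of `d`-closed `k`-forms. -/
def Zsub (k : ℕ) : Submodule ℝ (AlternatingMap ℝ g ℝ (Fin k)) where
  carrier := {α | ceD g α = 0}
  add_mem' := by
    intro a b ha hb
    simp only [Set.mem_setOf_eq] at *
    rw [ceD_add, ha, hb, add_zero]
  zero_mem' := by
    simpa only [Set.mem_setOf_eq] using ceD_zero g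
  smul_mem' := by
    intro c a ha
    simp only [Set.mem_setOf_eq] at *
    rw [ceD_smul, ha, smul_zero]

/-- The space of `d`-exact `k`-forms. -/
def Bsub : (k : ℕ) → Submodule ℝ (AlternatingMap ℝ g ℝ (Fin k))
  | 0 => ⊥
  | (k + 1) =>
    { carrier := {α | ∃ β : AlternatingMap ℝ g ℝ (Fin k), ceD g β = ⇑α}
      add_mem' := by
        rintro a b ⟨βa, hβa⟩ ⟨βb, hβb⟩
        exact ⟨βa + βb, by rw [ceD_add, hβa, hβb]; ext x; simp⟩
      zero_mem' := ⟨0, by rw [ceD_zero]; ext x; simp⟩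
      smul_mem' := by
        rintro c a ⟨β, hβ⟩
        exact ⟨c • β, by rw [ceD_smul, hβ]; rfl⟩ }

/-- The `k`-th Lie algebra cohomology `H^k(g;ℝ) = ker d / im d`. -/
abbrev Hcoh (k : ℕ) : Type _ :=
  @HasQuotient.Quotient (Zsub g k) (Submodule ℝ (Zsub g k))
    (Submodule.hasQuotient (R := ℝ) (M := Zsub g k)) ((Bsub g k).comap (Zsub g k).subtype)

/-- The cohomology class of a `d`-closed `k`-form. -/
def cls {k : ℕ} (α : AlternatingMap ℝ g ℝ (Fin k)) (hα : ceD g α = 0) : Hcoh g k :=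
  Submodule.Quotient.mk (⟨α, hα⟩ : Zsub g k)

/-- The subgroup `H^{k+}_K(g;ℝ)` of classes admitting a `d`-closed `K`-invariant
representative.  (The set of such classes is a linear subspace, so taking its span
does not enlarge it.) -/
def Hplus (K : g →ₗ[ℝ] g) (k : ℕ) : Submodule ℝ (Hcoh g k) :=
  Submodule.span ℝ
    {c | ∃ (α : AlternatingMap ℝ g ℝ (Fin k)) (hα : ceD g α = 0),
        α.compLinearMap K = α ∧ c = cls g α hα}

/-- The subgroup `H^{k−}_K(g;ℝ)` of classes admitting a `d`-closed
`K`-anti-invariant representative. -/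
def Hminus (K : g →ₗ[ℝ] g) (k : ℕ) : Submodule ℝ (Hcoh g k) :=
  Submodule.span ℝ
    {c | ∃ (α : AlternatingMap ℝ g ℝ (Fin k)) (hα : ceD g α = 0),
        α.compLinearMap K = -α ∧ c = cls g α hα}

/-- The wedge product of `k` linear functionals, as an alternating `k`-form. -/
def wedge {k : ℕ} (fs : Fin k → (g →ₗ[ℝ] ℝ)) :
    AlternatingMap ℝ g ℝ (Fin k) :=
  MultilinearMap.alternatization
    ((MultilinearMap.mkPiAlgebra ℝ (Fin k) ℝ).compLinearMap fs)

end ChevalleyEilenberg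

noncomputable section

section AuxLemmas

variable (g : Type*) [LieRing g] [LieAlgebra ℝ g]

theorem ceD_one_apply (β : AlternatingMap ℝ g ℝ (Fin 1)) (x : Fin 2 → g) :
    ceD g β x = -β ![⁅x 0, x 1⁆] := by
  show (∑ i : Fin 2, ∑ j : Fin 2, _) = _
  rw [Fin.sum_univ_two, Fin.sum_univ_two, Fin.sum_univ_two]
  norm_num
  congr 1
  funext m
  fin_cases m
  simp

theorem ceD_two_apply (α : AlternatingMap ℝ g ℝ (Fin 2)) (x : Fin 3 → g) :
    ceD g α x = -α ![⁅x 0, x 1⁆, x 2] + α ![⁅x 0, x 2⁆, x 1] - α ![⁅x 1, x 2⁆, x 0] := by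
  show (∑ i : Fin 3, ∑ j : Fin 3, _) = _
  simp only [Fin.sum_univ_three]
  norm_num
  rw [sub_eq_add_neg]
  congr 1
  · congr 1
    · refine congrArg (fun y => -(α y)) ?_
      funext m
      fin_cases m
      · rfl
      · show x _ = x 2; congr 1
    · refine congrArg (⇑α) ?_
      funext m
      fin_cases m
      · rfl
      · show x _ = x 1; congr 1
  · refine congrArg (fun y => -(α y)) ?_
    funext m
    fin_cases m
    · rfl
    · show x _ = x 0; congr 1

theorem wedge_one_apply (f : g →ₗ[ℝ] ℝ) (v : Fin 1 → g) :
    wedge g ![f] v = f (v 0) := by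
  rw [wedge, MultilinearMap.alternatization_apply]
  rw [show (Finset.univ : Finset (Equiv.Perm (Fin 1))) = {1} from by decide]
  rw [Finset.sum_singleton]
  simp

theorem wedge_two_apply (f h : g →ₗ[ℝ] ℝ) (v : Fin 2 → g) :
    wedge g ![f, h] v = f (v 0) * h (v 1) - f (v 1) * h (v 0) := by
  rw [wedge, MultilinearMap.alternatization_apply]
  rw [show (Finset.univ : Finset (Equiv.Perm (Fin 2))) = {1, Equiv.swap 0 1} from by decide]
  rw [Finset.sum_insert (by decide), Finset.sum_singleton]
  simp [Fin.prod_univ_two]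
  ring

variable (e : Module.Basis (Fin 4) ℝ g)

theorem coord_basis (i j : Fin 4) : e.coord i (e j) = if j = i then 1 else 0 := by
  simp [Module.Basis.coord_apply, Module.Basis.repr_self, Finsupp.single_apply]

theorem bracket_table
    (hbr : ∀ i j : Fin 4, i < j → ⁅e i, e j⁆ =
      (if i = 0 ∧ j = 1 then -e 2 else if i = 0 ∧ j = 2 then -e 3 else 0))
    (i j : Fin 4) :
    ⁅e i, e j⁆ = (if i = 0 ∧ j = 1 then -e 2 else if i = 1 ∧ j = 0 then e 2
      else if i = 0 ∧ j = 2 then -e 3 else if i = 2 ∧ j = 0 then e 3 else 0) := by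
  fin_cases i <;> fin_cases j <;> simp only [show ((0:Fin 4) = 0) = True from by simp] <;>
    first
      | (rw [hbr _ _ (by decide)]; simp [Fin.ext_iff, show ((3:Fin 4):ℕ) = 3 from rfl, show ((2:Fin 4):ℕ) = 2 from rfl, show ((1:Fin 4):ℕ) = 1 from rfl, show ((0:Fin 4):ℕ) = 0 from rfl])
      | (rw [← lie_skew, hbr _ _ (by decide)]; simp [Fin.ext_iff, show ((3:Fin 4):ℕ) = 3 from rfl, show ((2:Fin 4):ℕ) = 2 from rfl, show ((1:Fin 4):ℕ) = 1 from rfl, show ((0:Fin 4):ℕ) = 0 from rfl])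
      | simp [Fin.ext_iff, show ((3:Fin 4):ℕ) = 3 from rfl, show ((2:Fin 4):ℕ) = 2 from rfl, show ((1:Fin 4):ℕ) = 1 from rfl, show ((0:Fin 4):ℕ) = 0 from rfl]

theorem bracket_expand
    (hbr : ∀ i j : Fin 4, i < j → ⁅e i, e j⁆ =
      (if i = 0 ∧ j = 1 then -e 2 else if i = 0 ∧ j = 2 then -e 3 else 0))
    (x y : g) :
    ⁅x, y⁆ = (e.coord 1 x * e.coord 0 y - e.coord 0 x * e.coord 1 y) • e 2
      + (e.coord 2 x * e.coord 0 y - e.coord 0 x * e.coord 2 y) • e 3 := by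
  conv_lhs => rw [← e.sum_repr x, ← e.sum_repr y]
  simp only [Fin.sum_univ_four, add_lie, lie_add, smul_lie, lie_smul,
    bracket_table g e hbr, Module.Basis.coord_apply, Fin.ext_iff,
    show ((0:Fin 4):ℕ) = 0 from rfl, show ((1:Fin 4):ℕ) = 1 from rfl,
    show ((2:Fin 4):ℕ) = 2 from rfl, show ((3:Fin 4):ℕ) = 3 from rfl]
  norm_num
  module

theorem coord_bracket0
    (hbr : ∀ i j : Fin 4, i < j → ⁅e i, e j⁆ =
      (if i = 0 ∧ j = 1 then -e 2 else if i = 0 ∧ j = 2 then -e 3 else 0))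
    (x y : g) : e.coord 0 ⁅x, y⁆ = 0 := by
  rw [bracket_expand g e hbr x y]
  simp [coord_basis]

theorem coord_bracket1
    (hbr : ∀ i j : Fin 4, i < j → ⁅e i, e j⁆ =
      (if i = 0 ∧ j = 1 then -e 2 else if i = 0 ∧ j = 2 then -e 3 else 0))
    (x y : g) : e.coord 1 ⁅x, y⁆ = 0 := by
  rw [bracket_expand g e hbr x y]
  simp [coord_basis]

theorem coord_bracket2
    (hbr : ∀ i j : Fin 4, i < j → ⁅e i, e j⁆ =
      (if i = 0 ∧ j = 1 then -e 2 else if i = 0 ∧ j = 2 then -e 3 else 0))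
    (x y : g) : e.coord 2 ⁅x, y⁆
      = e.coord 1 x * e.coord 0 y - e.coord 0 x * e.coord 1 y := by
  rw [bracket_expand g e hbr x y]
  simp [coord_basis]

theorem coord_bracket3
    (hbr : ∀ i j : Fin 4, i < j → ⁅e i, e j⁆ =
      (if i = 0 ∧ j = 1 then -e 2 else if i = 0 ∧ j = 2 then -e 3 else 0))
    (x y : g) : e.coord 3 ⁅x, y⁆
      = e.coord 2 x * e.coord 0 y - e.coord 0 x * e.coord 2 y := by
  rw [bracket_expand g e hbr x y]
  simp [coord_basis]

end AuxLemmas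

section Stmt11

variable (g : Type*) [LieRing g] [LieAlgebra ℝ g] (e : Module.Basis (Fin 4) ℝ g)

/-- `g⁺ = span(e_1, e_4 − e_2)` (0-indexed: `e 0, e 3 - e 1`). -/
def gP : Submodule ℝ g := Submodule.span ℝ {e 0, e 3 - e 1}

/-- `g⁻ = span(e_2, e_3)` (0-indexed: `e 1, e 2`). -/
def gM : Submodule ℝ g := Submodule.span ℝ {e 1, e 2}

/-- `e^1∧e^4`. -/
def a14 : AlternatingMap ℝ g ℝ (Fin 2) := wedge g ![e.coord 0, e.coord 3]

/-- `e^1∧e^2`. -/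
def a12 : AlternatingMap ℝ g ℝ (Fin 2) := wedge g ![e.coord 0, e.coord 1]

/-- On the 4-dimensional nilpotent Lie algebra with
`[e_1,e_2] = −e_3`, `[e_1,e_3] = −e_4`, the almost D-complex structure with
`g⁺ = span(e_1, e_4 − e_2)`, `g⁻ = span(e_2, e_3)` is not integrable
(`[e_1, e_4 − e_2] = e_3 ∉ g⁺`), and is not linear C∞-pure at the 2nd stage:
the `K`-invariant form `e^1∧e^4` and the `K`-anti-invariant form
`e^1∧(e^2+e^4) = e^1∧e^4 + d e^3` define the same nonzero class, so
`0 ≠ [e^1∧e^4] ∈ H^{2+}_K ∩ H^{2−}_K`. -/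
theorem four_dim_almost_Dcomplex_not_pure
    (hbr : ∀ i j : Fin 4, i < j → ⁅e i, e j⁆ =
      (if i = 0 ∧ j = 1 then -e 2 else if i = 0 ∧ j = 2 then -e 3 else 0))
    (K : g →ₗ[ℝ] g)
    (hKp : ∀ x ∈ gP g e, K x = x) (hKq : ∀ x ∈ gM g e, K x = -x) :
    IsCompl (gP g e) (gM g e) ∧
    ⁅e 0, e 3 - e 1⁆ = e 2 ∧
    e 2 ∉ gP g e ∧
    (a14 g e).compLinearMap K = a14 g e ∧
    (a14 g e + a12 g e).compLinearMap K = -(a14 g e + a12 g e) ∧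
    ceD g (wedge g ![e.coord 2]) = ⇑(a12 g e) ∧
    (∃ (h1 : ceD g (a14 g e) = 0) (h2 : ceD g (a14 g e + a12 g e) = 0),
      cls g (a14 g e) h1 = cls g (a14 g e + a12 g e) h2 ∧
      cls g (a14 g e) h1 ≠ 0 ∧
      cls g (a14 g e) h1 ∈ Hplus g K 2 ⊓ Hminus g K 2) := by
  -- basic span membership facts
  have he0P : e 0 ∈ gP g e := Submodule.subset_span (Set.mem_insert _ _)
  have he31P : e 3 - e 1 ∈ gP g e :=
    Submodule.subset_span (Set.mem_insert_of_mem _ rfl)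
  have he1M : e 1 ∈ gM g e := Submodule.subset_span (Set.mem_insert _ _)
  have he2M : e 2 ∈ gM g e := Submodule.subset_span (Set.mem_insert_of_mem _ rfl)
  -- K on the basis
  have hKe0 : K (e 0) = e 0 := hKp _ he0P
  have hKe1 : K (e 1) = -e 1 := hKq _ he1M
  have hKe2 : K (e 2) = -e 2 := hKq _ he2M
  have hKe3 : K (e 3) = e 3 - e 1 - e 1 := by
    have h3 : K (e 3) = K (e 3 - e 1) + K (e 1) := by
      rw [← map_add]; congr 1; abel
    rw [h3, hKp _ he31P, hKe1]; abel
  -- coordinates composed with K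
  have hc0 : ∀ v, e.coord 0 (K v) = e.coord 0 v := by
    intro v
    have h : (e.coord 0).comp K = e.coord 0 := by
      apply e.ext; intro i; fin_cases i <;>
        simp [hKe0, hKe1, hKe2, hKe3, coord_basis]
    exact DFunLike.congr_fun h v
  have hc3 : ∀ v, e.coord 3 (K v) = e.coord 3 v := by
    intro v
    have h : (e.coord 3).comp K = e.coord 3 := by
      apply e.ext; intro i; fin_cases i <;>
        simp [hKe0, hKe1, hKe2, hKe3, coord_basis]
    exact DFunLike.congr_fun h v
  have hc13 : ∀ v, e.coord 1 (K v) + e.coord 3 (K v)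
      = -(e.coord 1 v + e.coord 3 v) := by
    intro v
    have h : (e.coord 1 + e.coord 3).comp K = -(e.coord 1 + e.coord 3) := by
      apply e.ext; intro i; fin_cases i <;>
        simp [hKe0, hKe1, hKe2, hKe3, coord_basis]
    have := DFunLike.congr_fun h v
    simpa using this
  -- IsCompl
  have hdisj : Disjoint (gP g e) (gM g e) := by
    rw [Submodule.disjoint_def]
    intro x hxP hxM
    rw [gP, Submodule.mem_span_pair] at hxP
    rw [gM, Submodule.mem_span_pair] at hxM
    obtain ⟨a, b, hab⟩ := hxP
    obtain ⟨c, d, hcd⟩ := hxM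
    have h0 := congrArg (e.coord 0) (hab.trans hcd.symm)
    have h3 := congrArg (e.coord 3) (hab.trans hcd.symm)
    simp [coord_basis] at h0 h3
    rw [← hab, h0, h3]
    simp
  have hcodis : Codisjoint (gP g e) (gM g e) := by
    rw [codisjoint_iff, eq_top_iff]
    intro x _
    rw [← e.sum_repr x]
    refine Submodule.sum_mem _ fun i _ => Submodule.smul_mem _ _ ?_
    fin_cases i
    · exact Submodule.mem_sup_left he0P
    · exact Submodule.mem_sup_right he1M
    · exact Submodule.mem_sup_right he2M
    · show e 3 ∈ gP g e ⊔ gM g e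
      have h3 : e 3 = (e 3 - e 1) + e 1 := by abel
      rw [h3]
      exact Submodule.add_mem _ (Submodule.mem_sup_left he31P)
        (Submodule.mem_sup_right he1M)
  -- the bracket [e_1, e_4 - e_2] = e_3 (0-indexed)
  have hb03 : ⁅e 0, e 3 - e 1⁆ = e 2 := by
    rw [lie_sub, hbr 0 3 (by decide), hbr 0 1 (by decide)]
    simp [Fin.ext_iff, show ((3:Fin 4):ℕ) = 3 from rfl,
      show ((2:Fin 4):ℕ) = 2 from rfl, show ((1:Fin 4):ℕ) = 1 from rfl,
      show ((0:Fin 4):ℕ) = 0 from rfl]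
  have hnot : e 2 ∉ gP g e := by
    rw [gP, Submodule.mem_span_pair]
    rintro ⟨a, b, hab⟩
    have h2 := congrArg (e.coord 2) hab
    simp [coord_basis] at h2
  -- invariance of a14
  have hinv : (a14 g e).compLinearMap K = a14 g e := by
    ext v
    simp only [AlternatingMap.compLinearMap_apply, a14, wedge_two_apply]
    rw [hc0 (v 0), hc0 (v 1), hc3 (v 0), hc3 (v 1)]
  -- anti-invariance of a14 + a12
  have hanti : (a14 g e + a12 g e).compLinearMap K = -(a14 g e + a12 g e) := by
    ext v
    simp only [AlternatingMap.compLinearMap_apply, AlternatingMap.add_apply,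
      AlternatingMap.neg_apply, a14, a12, wedge_two_apply]
    rw [hc0 (v 0), hc0 (v 1)]
    linear_combination e.coord 0 (v 0) * hc13 (v 1) - e.coord 0 (v 1) * hc13 (v 0)
  -- d(e^3) = e^1 ∧ e^2
  have hceD3 : ceD g (wedge g ![e.coord 2]) = ⇑(a12 g e) := by
    funext x
    rw [ceD_one_apply, wedge_one_apply]
    show -e.coord 2 ⁅x 0, x 1⁆ = a12 g e x
    rw [coord_bracket2 g e hbr]
    simp only [a12, wedge_two_apply]
    ring
  -- closedness
  have hd14 : ceD g (a14 g e) = 0 := by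
    funext x
    rw [ceD_two_apply]
    simp only [a14, wedge_two_apply, Matrix.cons_val_zero, Matrix.cons_val_one,
      Matrix.head_cons, coord_bracket0 g e hbr, coord_bracket3 g e hbr,
      Pi.zero_apply]
    ring
  have hd12 : ceD g (a12 g e) = 0 := by
    funext x
    rw [ceD_two_apply]
    simp only [a12, wedge_two_apply, Matrix.cons_val_zero, Matrix.cons_val_one,
      Matrix.head_cons, coord_bracket0 g e hbr, coord_bracket1 g e hbr,
      Pi.zero_apply]
    ring
  have hd2 : ceD g (a14 g e + a12 g e) = 0 := by
    rw [ceD_add, hd14, hd12]; simp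
  -- the difference is exact
  have hB : (a14 g e - (a14 g e + a12 g e)) ∈ Bsub g 2 := by
    show ∃ β : AlternatingMap ℝ g ℝ (Fin 1),
      ceD g β = ⇑(a14 g e - (a14 g e + a12 g e))
    refine ⟨(-1 : ℝ) • wedge g ![e.coord 2], ?_⟩
    rw [ceD_smul, hceD3]
    funext x
    simp
  have hclseq : cls g (a14 g e) hd14 = cls g (a14 g e + a12 g e) hd2 := by
    rw [cls, cls, Submodule.Quotient.eq]
    exact Submodule.mem_comap.mpr hB
  -- nonzero class
  have hne : cls g (a14 g e) hd14 ≠ 0 := by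
    intro h
    rw [cls, Submodule.Quotient.mk_eq_zero, Submodule.mem_comap] at h
    obtain ⟨β, hβ⟩ := h
    have hx := congrFun hβ ![e 0, e 3]
    rw [ceD_one_apply] at hx
    have hz : ⁅(![e 0, e 3] : Fin 2 → g) 0, ![e 0, e 3] 1⁆ = 0 := by
      show ⁅e 0, e 3⁆ = 0
      rw [hbr 0 3 (by decide)]
      simp [Fin.ext_iff, show ((3:Fin 4):ℕ) = 3 from rfl,
        show ((1:Fin 4):ℕ) = 1 from rfl, show ((2:Fin 4):ℕ) = 2 from rfl]
    rw [hz] at hx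
    have hb0 : β ![(0:g)] = 0 := by
      have hzz : ![(0:g)] = (fun _ => (0:g)) := by
        funext m; fin_cases m; rfl
      rw [hzz]
      exact β.map_zero
    rw [hb0] at hx
    have hval : (a14 g e) ![e 0, e 3] = 1 := by
      simp [a14, wedge_two_apply, coord_basis]
    have hfin : (-0 : ℝ) = (a14 g e) ![e 0, e 3] := hx
    rw [hval] at hfin
    norm_num at hfin
  -- membership in H^{2+} ∩ H^{2-}
  have hplus : cls g (a14 g e) hd14 ∈ Hplus g K 2 :=
    Submodule.subset_span ⟨a14 g e, hd14, hinv, rfl⟩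
  have hminus : cls g (a14 g e) hd14 ∈ Hminus g K 2 :=
    Submodule.subset_span ⟨a14 g e + a12 g e, hd2, hanti, hclseq⟩
  exact ⟨⟨hdisj, hcodis⟩, hb03, hnot, hinv, hanti, hceD3, hd14, hd2, hclseq, hne,
    Submodule.mem_inf.mpr ⟨hplus, hminus⟩⟩

end Stmt11

end
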